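/- For any n ∈ ℕ, p ∈ (0,1] with pn ∈ ℤ, and k ≥ 1, the span of the functions AND_T : S(n,p) → ℝ over all T ⊆ [n] with |T| ≤ k equals the span of the functions Ψ_Q over all k'-tuples Q with k' ≤ k; that is, span_{|T| ≤ k}{AND_T} = span_{|Q| ≤ k}{Ψ_Q} as subspaces of the space of real-valued functions on S(n,p). -/

import Mathlib

open Finset
open scoped Classical

/-- A point of the slice `S(n,p)`: a Boolean vector whose number of ones equals `p * n`. -/
abbrev SlicePoint (n : ℕ) (p : ℝ) : Type :=
  {x : Fin n → Bool // ((Finset.univ.filter (fun i => x i = true)).card : ℝ) = p * n}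

variable {n : ℕ} {p : ℝ}

/-- Expectation with respect to the uniform measure on the slice. -/
noncomputable def sExp (f : SlicePoint n p → ℝ) : ℝ :=
  (∑ x : SlicePoint n p, f x) / (Fintype.card (SlicePoint n p) : ℝ)

/-- The inner product `⟨f,g⟩ = E_x [f x * g x]` on functions on the slice. -/
noncomputable def sInner (f g : SlicePoint n p → ℝ) : ℝ :=
  sExp (fun x => f x * g x)

/-- `‖f‖₂² = E_x [f x ^ 2]`. -/
noncomputable def sNormSq (f : SlicePoint n p → ℝ) : ℝ := sInner f f

/-- `‖f‖₂`. -/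
noncomputable def sNorm (f : SlicePoint n p → ℝ) : ℝ := Real.sqrt (sNormSq f)

/-- The `i`-th coordinate of a slice point, viewed as a real number in `{0,1}`. -/
def coordR (x : SlicePoint n p) (i : Fin n) : ℝ := if x.1 i then 1 else 0

/-- `AND_T (x) = ∏_{i ∈ T} x_i`. -/
def andT (T : Finset (Fin n)) : SlicePoint n p → ℝ := fun x => ∏ i ∈ T, coordR x i

/-- The space `L_k` of functions of degree at most `k` on the slice. -/
def degLE (n : ℕ) (p : ℝ) (k : ℕ) : Submodule ℝ (SlicePoint n p → ℝ) :=
  Submodule.span ℝ {g | ∃ T : Finset (Fin n), T.card ≤ k ∧ g = andT T}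

/-- The space `L_{k-1}` (i.e. spanned by `AND_T` with `|T| < k`). -/
def degLT (n : ℕ) (p : ℝ) (k : ℕ) : Submodule ℝ (SlicePoint n p → ℝ) :=
  Submodule.span ℝ {g | ∃ T : Finset (Fin n), T.card < k ∧ g = andT T}

/-- `fk` is the orthogonal projection `f^{≤ k}` of `f` onto `L_k`. -/
def IsLowProj (n : ℕ) (p : ℝ) (k : ℕ) (f fk : SlicePoint n p → ℝ) : Prop :=
  fk ∈ degLE n p k ∧ ∀ g ∈ degLE n p k, sInner (f - fk) g = 0

/-- `fk` is the orthogonal projection of `f` onto the span of `AND_T`, `|T| < k`. -/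
def IsLowProjLT (n : ℕ) (p : ℝ) (k : ℕ) (f fk : SlicePoint n p → ℝ) : Prop :=
  fk ∈ degLT n p k ∧ ∀ g ∈ degLT n p k, sInner (f - fk) g = 0

/-- `Pr_x [f x ≠ g x]` under the uniform measure on the slice. -/
noncomputable def probNe (f g : SlicePoint n p → ℝ) : ℝ :=
  sExp (fun x => if f x = g x then 0 else 1)

/-- The action of a permutation on a slice point: `(x^π)_{π i} = x_i`. -/
def permPt (π : Equiv.Perm (Fin n)) (x : SlicePoint n p) : SlicePoint n p :=
  ⟨fun i => x.1 (π.symm i), by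
    have h : (Finset.univ.filter (fun i => x.1 (π.symm i) = true)) =
        (Finset.univ.filter (fun i => x.1 i = true)).map π.toEmbedding := by
      ext i
      simp [Finset.mem_map_equiv]
    rw [h, Finset.card_map]
    exact x.2⟩

/-- The derivative operator `D_{ij} f = (f - f^{(ij)})/2`. -/
noncomputable def Dij (i j : Fin n) (f : SlicePoint n p → ℝ) : SlicePoint n p → ℝ :=
  fun x => (f x - f (permPt (Equiv.swap i j) x)) / 2

/-- The derivative operator `D_P` associated with a set `P` of pairs,
obtained by composing the `D_{ab}` for `(a,b) ∈ P` (these commute for tuples). -/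
noncomputable def DP (P : Finset (Fin n × Fin n)) (f : SlicePoint n p → ℝ) :
    SlicePoint n p → ℝ :=
  P.toList.foldr (fun q g => Dij q.1 q.2 g) f

/-- `P` is a `k`-tuple: `k` pairs `(a,b)` with `a < b`, all `2k` entries distinct. -/
def IsTuple {n : ℕ} (k : ℕ) (P : Finset (Fin n × Fin n)) : Prop :=
  P.card = k ∧ (∀ q ∈ P, q.1 < q.2) ∧
    ∀ q ∈ P, ∀ r ∈ P, q ≠ r →
      q.1 ≠ r.1 ∧ q.1 ≠ r.2 ∧ q.2 ≠ r.1 ∧ q.2 ≠ r.2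

/-- `P` is shifted: for every pair `(a,b) ∈ P`, every `a' ≤ a` occurs as an entry of `P`. -/
def IsShifted {n : ℕ} (P : Finset (Fin n × Fin n)) : Prop :=
  ∀ q ∈ P, ∀ a : Fin n, a ≤ q.1 → ∃ r ∈ P, r.1 = a ∨ r.2 = a

/-- `P` is sorted: `a_i < a_j ↔ b_i < b_j`. -/
def IsSorted {n : ℕ} (P : Finset (Fin n × Fin n)) : Prop :=
  ∀ q ∈ P, ∀ r ∈ P, (q.1 < r.1 ↔ q.2 < r.2)

/-- `Ψ_P (x) = ∏_{(a,b) ∈ P} (x_b - x_a)`. -/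
def PsiP (P : Finset (Fin n × Fin n)) : SlicePoint n p → ℝ :=
  fun x => ∏ q ∈ P, (coordR x q.2 - coordR x q.1)

/-- The slice Laplacian `L f = f - (1 / C(n,2)) ∑_{i<j} f^{(ij)}`. -/
noncomputable def sliceLap (f : SlicePoint n p → ℝ) : SlicePoint n p → ℝ :=
  fun x => f x -
    (∑ q ∈ Finset.univ.filter (fun q : Fin n × Fin n => q.1 < q.2),
      f (permPt (Equiv.swap q.1 q.2) x)) / (n.choose 2 : ℝ)

/-- The noise operator `H_t = exp (-t L) = ∑_l (-t)^l L^l / l!`. -/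
noncomputable def Ht (t : ℝ) (f : SlicePoint n p → ℝ) : SlicePoint n p → ℝ :=
  fun x => ∑' l : ℕ, ((-t) ^ l / (l.factorial : ℝ)) * (sliceLap^[l] f) x

/-- The averaging operator `E_I f (x) = E_{Q ∼ S_I} [f (x^Q)]`, averaging over a uniformly
random permutation of the coordinates in `I` (fixing the coordinates outside `I`). -/
noncomputable def avgI (I : Finset (Fin n)) (f : SlicePoint n p → ℝ) : SlicePoint n p → ℝ :=
  fun x => (∑ σ : {σ : Equiv.Perm (Fin n) // ∀ i ∉ I, σ i = i}, f (permPt σ.1 x)) /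
    (Fintype.card {σ : Equiv.Perm (Fin n) // ∀ i ∉ I, σ i = i} : ℝ)

/-- The conditional variance `V_I (f) = ‖f - E_I f‖₂²`. -/
noncomputable def condVar (I : Finset (Fin n)) (f : SlicePoint n p → ℝ) : ℝ :=
  sNormSq (f - avgI I f)

/-- Expectation with respect to the uniform measure on the discrete cube. -/
noncomputable def cExp {n : ℕ} (f : (Fin n → Bool) → ℝ) : ℝ :=
  (∑ x : Fin n → Bool, f x) / (2 ^ n : ℝ)

/-- The Fourier–Walsh coefficient `f̂ (S) = E_x [f x * χ_S x]`. -/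
noncomputable def walshCoeff {n : ℕ} (f : (Fin n → Bool) → ℝ) (S : Finset (Fin n)) : ℝ :=
  cExp (fun x => f x * ∏ i ∈ S, (if x i then (-1 : ℝ) else 1))

/-- The Fourier weight of `f` beyond degree `k`: `W^{>k} (f) = ∑_{|S| > k} f̂(S)²`. -/
noncomputable def WAbove {n : ℕ} (k : ℕ) (f : (Fin n → Bool) → ℝ) : ℝ :=
  ∑ S ∈ Finset.univ.filter (fun S : Finset (Fin n) => k < S.card), walshCoeff f S ^ 2

/-- `Pr_x [f x ≠ g x]` under the uniform measure on the cube. -/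
noncomputable def cProbNe {n : ℕ} (f g : (Fin n → Bool) → ℝ) : ℝ :=
  cExp (fun x => if f x = g x then 0 else 1)

/-- The action of a permutation on a point of the cube: `(x^π)_{π i} = x_i`. -/
def cPerm {n : ℕ} (π : Equiv.Perm (Fin n)) (x : Fin n → Bool) : Fin n → Bool :=
  fun i => x (π.symm i)

/-- The derivative operator on the cube. -/
noncomputable def cDij {n : ℕ} (i j : Fin n) (f : (Fin n → Bool) → ℝ) :
    (Fin n → Bool) → ℝ :=
  fun x => (f x - f (cPerm (Equiv.swap i j) x)) / 2

/- ### Auxiliary lemmas -/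

lemma coordR_sq (x : SlicePoint n p) (i : Fin n) : coordR x i * coordR x i = coordR x i := by
  unfold coordR; split <;> ring

lemma sum_coordR (x : SlicePoint n p) : ∑ i, coordR x i = p * n := by
  have h := x.2
  rw [← h]
  unfold coordR
  rw [Finset.sum_boole]

lemma coordR_mul_andT (x : SlicePoint n p) (i : Fin n) (S : Finset (Fin n)) :
    coordR x i * andT S x = andT (insert i S) x := by
  by_cases hi : i ∈ S
  · rw [Finset.insert_eq_self.mpr hi]
    unfold andT
    rw [← Finset.mul_prod_erase S _ hi, ← mul_assoc, coordR_sq]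
  · unfold andT
    rw [Finset.prod_insert hi]

lemma psiP_insert (x : SlicePoint n p) (q : Fin n × Fin n) (P : Finset (Fin n × Fin n))
    (hq : q ∉ P) :
    PsiP (insert q P) x = (coordR x q.2 - coordR x q.1) * PsiP P x := by
  unfold PsiP
  rw [Finset.prod_insert hq]

lemma and_mul_psi_mem_degLE (k : ℕ) (Q : Finset (Fin n × Fin n)) :
    ∀ (S : Finset (Fin n)), S.card + Q.card ≤ k →
      (fun x : SlicePoint n p => andT S x * PsiP Q x) ∈ degLE n p k := by
  induction Q using Finset.induction_on with
  | empty =>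
    intro S hS
    have h0 : (fun x : SlicePoint n p => andT S x * PsiP ∅ x) = andT S := by
      funext x; simp [PsiP]
    rw [h0]
    exact Submodule.subset_span ⟨S, by simpa using hS, rfl⟩
  | @insert q Q hq ih =>
    intro S hS
    have key : (fun x : SlicePoint n p => andT S x * PsiP (insert q Q) x)
        = (fun x : SlicePoint n p => andT (insert q.2 S) x * PsiP Q x)
          - (fun x : SlicePoint n p => andT (insert q.1 S) x * PsiP Q x) := by
      funext x
      simp only [Pi.sub_apply]
      rw [psiP_insert x q Q hq, ← coordR_mul_andT x q.2 S, ← coordR_mul_andT x q.1 S]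
      ring
    rw [key]
    have h2 : (insert q.2 S).card + Q.card ≤ k := by
      have := Finset.card_insert_le q.2 S
      have hc := Finset.card_insert_of_notMem hq
      omega
    have h1 : (insert q.1 S).card + Q.card ≤ k := by
      have := Finset.card_insert_le q.1 S
      have hc := Finset.card_insert_of_notMem hq
      omega
    exact sub_mem (ih _ h2) (ih _ h1)

set_option maxHeartbeats 1000000 in
lemma and_mul_psi_mem_psiSpan (k : ℕ) :
    ∀ (s : ℕ) (S : Finset (Fin n)) (P : Finset (Fin n × Fin n)),
      S.card = s →
      (∀ q ∈ P, q.1 < q.2) →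
      (∀ q ∈ P, q.1 ∉ S ∧ q.2 ∉ S) →
      (∀ q ∈ P, ∀ r ∈ P, q ≠ r → q.1 ≠ r.1 ∧ q.1 ≠ r.2 ∧ q.2 ≠ r.1 ∧ q.2 ≠ r.2) →
      S.card + P.card ≤ k →
      (fun x : SlicePoint n p => andT S x * PsiP P x) ∈
        Submodule.span ℝ
          {g : SlicePoint n p → ℝ | ∃ (k' : ℕ) (Q : Finset (Fin n × Fin n)),
            k' ≤ k ∧ IsTuple k' Q ∧ g = PsiP Q} := by
  intro s
  induction s with
  | zero =>
    intro S P hcard hord hdisj hdist hle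
    have hS : S = ∅ := Finset.card_eq_zero.mp hcard
    subst hS
    have h0 : (fun x : SlicePoint n p => andT ∅ x * PsiP P x) = PsiP P := by
      funext x; simp [andT]
    rw [h0]
    exact Submodule.subset_span ⟨P.card, P, by omega, ⟨rfl, hord, hdist⟩, rfl⟩
  | succ s ih =>
    intro S P hcard hord hdisj hdist hle
    obtain ⟨c, hc⟩ : S.Nonempty := Finset.card_pos.mp (by omega)
    set S' := S.erase c with hS'def
    have hS' : S'.card = s := by
      rw [hS'def, Finset.card_erase_of_mem hc, hcard]
      omega
    have hins : insert c S' = S := Finset.insert_erase hc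
    have hcS' : c ∉ S' := Finset.notMem_erase c S
    set E := S ∪ P.biUnion (fun q => {q.1, q.2}) with hEdef
    have hEcard : E.card ≤ n := by
      have := Finset.card_le_univ E
      simpa using this
    -- side conditions for S'
    have hdisj' : ∀ q ∈ P, q.1 ∉ S' ∧ q.2 ∉ S' := by
      intro q hq
      have := hdisj q hq
      exact ⟨fun h => this.1 (Finset.mem_of_mem_erase h),
             fun h => this.2 (Finset.mem_of_mem_erase h)⟩
    -- membership of the summands
    have hgmem : ∀ d ∈ Eᶜ,
        (fun x : SlicePoint n p =>
          andT S' x * ((coordR x c - coordR x d) * PsiP P x)) ∈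
        Submodule.span ℝ
          {g : SlicePoint n p → ℝ | ∃ (k' : ℕ) (Q : Finset (Fin n × Fin n)),
            k' ≤ k ∧ IsTuple k' Q ∧ g = PsiP Q} := by
      intro d hd
      rw [Finset.mem_compl] at hd
      have hdS : d ∉ S := fun h => hd (Finset.mem_union_left _ h)
      have hdP : ∀ q ∈ P, d ≠ q.1 ∧ d ≠ q.2 := by
        intro q hq
        constructor <;> rintro rfl <;>
          exact hd (Finset.mem_union_right _ (Finset.mem_biUnion.mpr ⟨q, hq, by simp⟩))
      have hdc : d ≠ c := fun h => hdS (h ▸ hc)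
      have hcP : ∀ q ∈ P, c ≠ q.1 ∧ c ≠ q.2 := by
        intro q hq
        have := hdisj q hq
        exact ⟨fun h => this.1 (h ▸ hc), fun h => this.2 (h ▸ hc)⟩
      have hdS' : d ∉ S' := fun h => hdS (Finset.mem_of_mem_erase h)
      rcases lt_or_gt_of_ne hdc with hlt | hgt
      · -- d < c : pair (d, c)
        have hnm : (d, c) ∉ P := fun h => (hdP _ h).1 rfl
        have hmem := ih S' (insert (d, c) P) hS'
          (by
            intro q hq
            rcases Finset.mem_insert.mp hq with h | h
            · subst h; exact hlt
            · exact hord q h)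
          (by
            intro q hq
            rcases Finset.mem_insert.mp hq with h | h
            · subst h; exact ⟨hdS', hcS'⟩
            · exact hdisj' q h)
          (by
            intro q hq r hr hqr
            rcases Finset.mem_insert.mp hq with h | h <;>
              rcases Finset.mem_insert.mp hr with h' | h'
            · exact absurd (h.trans h'.symm) hqr
            · subst h
              exact ⟨(hdP r h').1, (hdP r h').2, (hcP r h').1, (hcP r h').2⟩
            · subst h'
              exact ⟨((hdP q h).1).symm, ((hcP q h).1).symm,
                     ((hdP q h).2).symm, ((hcP q h).2).symm⟩
            · exact hdist q h r h' hqr)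
          (by
            rw [Finset.card_insert_of_notMem hnm, hS']
            omega)
        have heq : (fun x : SlicePoint n p =>
            andT S' x * ((coordR x c - coordR x d) * PsiP P x))
            = (fun x : SlicePoint n p => andT S' x * PsiP (insert (d, c) P) x) := by
          funext x
          rw [psiP_insert x (d, c) P hnm]
        rw [heq]
        exact hmem
      · -- c < d : pair (c, d), with a sign
        have hnm : (c, d) ∉ P := fun h => (hcP _ h).1 rfl
        have hmem := ih S' (insert (c, d) P) hS'
          (by
            intro q hq
            rcases Finset.mem_insert.mp hq with h | h
            · subst h; exact hgt
            · exact hord q h)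
          (by
            intro q hq
            rcases Finset.mem_insert.mp hq with h | h
            · subst h; exact ⟨hcS', hdS'⟩
            · exact hdisj' q h)
          (by
            intro q hq r hr hqr
            rcases Finset.mem_insert.mp hq with h | h <;>
              rcases Finset.mem_insert.mp hr with h' | h'
            · exact absurd (h.trans h'.symm) hqr
            · subst h
              exact ⟨(hcP r h').1, (hcP r h').2, (hdP r h').1, (hdP r h').2⟩
            · subst h'
              exact ⟨((hcP q h).1).symm, ((hdP q h).1).symm,
                     ((hcP q h).2).symm, ((hdP q h).2).symm⟩
            · exact hdist q h r h' hqr)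
          (by
            rw [Finset.card_insert_of_notMem hnm, hS']
            omega)
        have heq : (fun x : SlicePoint n p =>
            andT S' x * ((coordR x c - coordR x d) * PsiP P x))
            = -(fun x : SlicePoint n p => andT S' x * PsiP (insert (c, d) P) x) := by
          funext x
          simp only [Pi.neg_apply]
          rw [psiP_insert x (c, d) P hnm]
          ring
        rw [heq]
        exact neg_mem hmem
    -- the pointwise summation identity
    have hsum : ∀ x : SlicePoint n p,
        ∑ d ∈ Eᶜ, (andT S' x * ((coordR x c - coordR x d) * PsiP P x))
          = ((n : ℝ) - E.card + 1) * (andT S x * PsiP P x)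
            + ((s : ℝ) + P.card - p * n) * (andT S' x * PsiP P x) := by
      intro x
      have h1 : andT S' x * (coordR x c * PsiP P x) = andT S x * PsiP P x := by
        rw [← hins, ← coordR_mul_andT x c S']
        ring
      -- sum of x_d over S
      have hSsum : ∑ d ∈ S, (andT S' x * (coordR x d * PsiP P x))
          = (s : ℝ) * (andT S' x * PsiP P x) + andT S x * PsiP P x := by
        conv_lhs => rw [← hins]
        rw [Finset.sum_insert hcS', h1]
        have : ∀ d ∈ S', andT S' x * (coordR x d * PsiP P x)
            = andT S' x * PsiP P x := by
          intro d hd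
          have : coordR x d * andT S' x = andT S' x := by
            rw [coordR_mul_andT x d S', Finset.insert_eq_self.mpr hd]
          linear_combination PsiP P x * this
        rw [Finset.sum_congr rfl this, Finset.sum_const, hS']
        push_cast
        ring
      -- sum over the pair entries
      have hpairdisj : (P : Set (Fin n × Fin n)).PairwiseDisjoint
          (fun q : Fin n × Fin n => ({q.1, q.2} : Finset (Fin n))) := by
        intro q hq r hr hqr
        have h := hdist q (Finset.mem_coe.mp hq) r (Finset.mem_coe.mp hr) hqr
        simp only [Function.onFun]
        rw [Finset.disjoint_left]
        intro a ha ha'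
        simp only [Finset.mem_insert, Finset.mem_singleton] at ha ha'
        rcases ha with rfl | rfl <;> rcases ha' with h' | h' <;>
          first
          | exact h.1 h' | exact h.2.1 h' | exact h.2.2.1 h' | exact h.2.2.2 h'
      have hBsum : ∑ d ∈ P.biUnion (fun q => {q.1, q.2}),
          (andT S' x * (coordR x d * PsiP P x))
          = (P.card : ℝ) * (andT S' x * PsiP P x) := by
        rw [Finset.sum_biUnion hpairdisj]
        have : ∀ q ∈ P, ∑ d ∈ ({q.1, q.2} : Finset (Fin n)),
            (andT S' x * (coordR x d * PsiP P x))
            = andT S' x * PsiP P x := by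
          intro q hq
          have hne : q.1 ≠ q.2 := ne_of_lt (hord q hq)
          rw [Finset.sum_pair hne]
          have hF : PsiP P x = (coordR x q.2 - coordR x q.1) * PsiP (P.erase q) x := by
            unfold PsiP
            rw [← Finset.mul_prod_erase P _ hq]
          have h1 := coordR_sq x q.1
          have h2 := coordR_sq x q.2
          rw [hF]
          linear_combination (andT S' x * PsiP (P.erase q) x) * h2
            - (andT S' x * PsiP (P.erase q) x) * h1
        rw [Finset.sum_congr rfl this, Finset.sum_const]
        push_cast
        ring
      have hSB : Disjoint S (P.biUnion (fun q => {q.1, q.2})) := by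
        rw [Finset.disjoint_left]
        intro a ha hb
        obtain ⟨q, hq, hmem⟩ := Finset.mem_biUnion.mp hb
        simp only [Finset.mem_insert, Finset.mem_singleton] at hmem
        rcases hmem with rfl | rfl
        · exact (hdisj q hq).1 ha
        · exact (hdisj q hq).2 ha
      have hEsum : ∑ d ∈ E, (andT S' x * (coordR x d * PsiP P x))
          = ((s : ℝ) + P.card) * (andT S' x * PsiP P x) + andT S x * PsiP P x := by
        rw [hEdef, Finset.sum_union hSB, hSsum, hBsum]
        ring
      have hUsum : ∑ d : Fin n, (andT S' x * (coordR x d * PsiP P x))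
          = p * n * (andT S' x * PsiP P x) := by
        have : ∀ d : Fin n, andT S' x * (coordR x d * PsiP P x)
            = coordR x d * (andT S' x * PsiP P x) := by
          intro d; ring
        rw [Finset.sum_congr rfl (fun d _ => this d), ← Finset.sum_mul, sum_coordR]
      have hCsum : ∑ d ∈ Eᶜ, (andT S' x * (coordR x d * PsiP P x))
          = p * n * (andT S' x * PsiP P x)
            - (((s : ℝ) + P.card) * (andT S' x * PsiP P x) + andT S x * PsiP P x) := by
        have := Finset.sum_add_sum_compl E (fun d => andT S' x * (coordR x d * PsiP P x))
        rw [hEsum, hUsum] at this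
        linarith
      have hsplit : ∀ d : Fin n, andT S' x * ((coordR x c - coordR x d) * PsiP P x)
          = andT S' x * (coordR x c * PsiP P x)
            - andT S' x * (coordR x d * PsiP P x) := by
        intro d; ring
      rw [Finset.sum_congr rfl (fun d _ => hsplit d), Finset.sum_sub_distrib,
        Finset.sum_const, hCsum, h1]
      have hccard : (Eᶜ.card : ℝ) = (n : ℝ) - E.card := by
        rw [Finset.card_compl]
        simp only [Fintype.card_fin]
        rw [Nat.cast_sub hEcard]
      rw [nsmul_eq_mul, hccard]
      ring
    -- combine
    have hne : ((n : ℝ) - E.card + 1) ≠ 0 := by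
      have : (E.card : ℝ) ≤ n := by exact_mod_cast hEcard
      linarith
    have key : (fun x : SlicePoint n p => andT S x * PsiP P x)
        = ((n : ℝ) - E.card + 1)⁻¹ •
          ((∑ d ∈ Eᶜ, fun x : SlicePoint n p =>
              andT S' x * ((coordR x c - coordR x d) * PsiP P x))
            - ((s : ℝ) + P.card - p * n) •
              fun x : SlicePoint n p => andT S' x * PsiP P x) := by
      funext x
      simp only [Pi.smul_apply, Pi.sub_apply, Finset.sum_apply, smul_eq_mul]
      rw [hsum x]
      field_simp
      ring
    rw [key]
    refine Submodule.smul_mem _ _ (sub_mem (Submodule.sum_mem _ hgmem)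
      (Submodule.smul_mem _ _ (ih S' P hS' hord hdisj' hdist (by omega))))

/-- The span of the functions `AND_T`, over `|T| ≤ k`, equals the span of the functions
`Ψ_Q`, over all `k'`-tuples `Q` with `k' ≤ k`. -/
theorem and_span_eq_psi_span (n : ℕ) (p : ℝ) (hp : 0 < p) (hp1 : p ≤ 1)
    (hpn : ∃ m : ℤ, (m : ℝ) = p * n) (k : ℕ) (hk : 1 ≤ k) :
    degLE n p k =
      Submodule.span ℝ
        {g : SlicePoint n p → ℝ | ∃ (k' : ℕ) (Q : Finset (Fin n × Fin n)),
          k' ≤ k ∧ IsTuple k' Q ∧ g = PsiP Q} := by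
  apply le_antisymm
  · rw [degLE, Submodule.span_le]
    rintro g ⟨T, hT, rfl⟩
    have h0 : (andT T : SlicePoint n p → ℝ)
        = fun x => andT T x * PsiP (∅ : Finset (Fin n × Fin n)) x := by
      funext x; simp [PsiP]
    rw [h0]
    exact and_mul_psi_mem_psiSpan k T.card T ∅ rfl (by simp) (by simp) (by simp)
      (by simpa using hT)
  · rw [Submodule.span_le]
    rintro g ⟨k', Q, hk', hQ, rfl⟩
    have h0 : (PsiP Q : SlicePoint n p → ℝ)
        = fun x => andT (∅ : Finset (Fin n)) x * PsiP Q x := by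
      funext x; simp [andT]
    rw [h0]
    refine and_mul_psi_mem_degLE k Q ∅ ?_
    have := hQ.1
    simp only [Finset.card_empty, zero_add]
    omega
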